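/- Let A be a C*-algebra, let m ≥ 1, and let w : Fin m → A satisfy relations (a)–(c). Define u := ∑_{i ∈ Fin m} (w i * w (i+1) * ⋯ * w (i+(m-1))), where for each i the product is taken in increasing order of the offset j = 0,…,m−1 and indices are computed cyclically in Fin m, and let p := ∑_{i ∈ Fin m} star (w i) * w i. Then star u * u = p, u * star u = p, and u commutes with every generator: u * w j = w j * u for all j ∈ Fin m. -/

import Mathlib

open Fin.NatCast Fin.CommRing

section Aux

variable {A : Type*} [NonUnitalCStarAlgebra A] {m : ℕ} [NeZero m] (w : Fin m → A)

/-- partial product `w i * w (i+1) * ⋯ * w (i+n)` -/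
private def PP (i : Fin m) (n : ℕ) : A :=
  (List.range n).foldl (fun acc j => acc * w (i + ((j + 1 : ℕ) : Fin m))) (w i)

private lemma PP_succ (i : Fin m) (n : ℕ) :
    PP w i (n + 1) = PP w i n * w (i + ((n + 1 : ℕ) : Fin m)) := by
  unfold PP
  rw [List.range_succ, List.foldl_append]
  rfl

variable (hpi : ∀ i : Fin m, w i * star (w i) * w i = w i)
    (hlink : ∀ i : Fin m, star (w i) * w i = w (i + 1) * star (w (i + 1)))
    (horth : ∀ i j : Fin m, i ≠ j → star (w i) * w j = 0)

include hpi hlink horth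

set_option linter.unusedSectionVars false

private lemma hstar (i j : Fin m) (hij : i ≠ j) : w i * star (w j) = 0 := by
  have h1 : star (w (j + 1)) * w (i + 1) = 0 :=
    horth _ _ (fun h => hij (add_right_cancel h).symm)
  have hy : w i * w (j + 1) = 0 := by
    rw [← CStarRing.star_mul_self_eq_zero_iff, star_mul]
    simp only [mul_assoc]
    rw [← mul_assoc (star (w i)) (w i), hlink i]
    simp only [← mul_assoc]
    rw [h1]
    simp
  have hsj : star (w j) = star (w j) * w j * star (w j) := by
    conv_lhs => rw [← hpi j]
    simp [star_mul, mul_assoc]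
  rw [hsj, ← mul_assoc, mul_assoc (w i), hlink j, ← mul_assoc, ← mul_assoc, hy]
  simp

private lemma hww (a b : Fin m) (hb : b ≠ a + 1) : w a * w b = 0 := by
  conv_lhs => rw [← hpi a]
  rw [mul_assoc (w a), hlink a, ← mul_assoc, mul_assoc,
    horth (a + 1) b (fun h => hb h.symm), mul_zero]

private lemma L1 (n : ℕ) (i j : Fin m) :
    star (PP w i n) * PP w j n =
      if i = j then star (w (i + (n : Fin m))) * w (i + (n : Fin m)) else 0 := by
  induction n with
  | zero =>
    by_cases h : i = j
    · simp [PP, h]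
    · simp [PP, h, horth i j h]
  | succ n ih =>
    rw [PP_succ, PP_succ, star_mul]
    by_cases h : i = j
    · subst h
      rw [if_pos rfl] at ih ⊢
      have key : i + ((n + 1 : ℕ) : Fin m) = (i + (n : Fin m)) + 1 := by
        push_cast; ring
      rw [mul_assoc, ← mul_assoc (star (PP w i n)), ih, key, hlink (i + (n : Fin m)),
        hpi (i + (n : Fin m) + 1)]
    · rw [if_neg h] at ih ⊢
      rw [mul_assoc, ← mul_assoc (star (PP w i n)), ih, zero_mul, mul_zero]

private lemma L3 (n : ℕ) (i : Fin m) :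
    PP w i n * (star (w (i + (n : Fin m))) * w (i + (n : Fin m))) = PP w i n := by
  induction n with
  | zero => simpa [PP, mul_assoc] using hpi i
  | succ n _ =>
    rw [PP_succ, mul_assoc,
      ← mul_assoc (w (i + ((n + 1 : ℕ) : Fin m))) (star (w (i + ((n + 1 : ℕ) : Fin m)))),
      hpi]

private lemma L2 (n : ℕ) (i j : Fin m) :
    PP w i n * star (PP w j n) = if i = j then w i * star (w i) else 0 := by
  induction n with
  | zero =>
    by_cases h : i = j
    · simp [PP, h]
    · simp [PP, h, hstar w hpi hlink horth i j h]
  | succ n ih =>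
    rw [PP_succ, PP_succ, star_mul]
    by_cases h : i = j
    · subst h
      rw [if_pos rfl] at ih ⊢
      have key : i + ((n + 1 : ℕ) : Fin m) = (i + (n : Fin m)) + 1 := by
        push_cast; ring
      rw [mul_assoc,
        ← mul_assoc (w (i + ((n + 1 : ℕ) : Fin m))) (star (w (i + ((n + 1 : ℕ) : Fin m)))),
        key, ← hlink (i + (n : Fin m)), ← mul_assoc, L3 w hpi hlink horth, ih]
    · rw [if_neg h] at ih ⊢
      have h' : i + ((n + 1 : ℕ) : Fin m) ≠ j + ((n + 1 : ℕ) : Fin m) :=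
        fun hh => h (add_right_cancel hh)
      rw [mul_assoc,
        ← mul_assoc (w (i + ((n + 1 : ℕ) : Fin m))) (star (w (j + ((n + 1 : ℕ) : Fin m)))),
        hstar w hpi hlink horth _ _ h', zero_mul, mul_zero]

private lemma L4 (n : ℕ) (i k : Fin m) (hk : k ≠ i + (n : Fin m) + 1) :
    PP w i n * w k = 0 := by
  cases n with
  | zero =>
    exact hww w hpi hlink horth i k (by simpa using hk)
  | succ n =>
    rw [PP_succ, mul_assoc, hww w hpi hlink horth _ k hk, mul_zero]

private lemma L5 (n : ℕ) (j : Fin m) :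
    w j * PP w (j + 1) n = PP w j (n + 1) := by
  induction n with
  | zero => rw [PP_succ]; simp [PP]
  | succ n ih =>
    rw [PP_succ, ← mul_assoc, ih, PP_succ w j (n + 1)]
    congr 2
    push_cast; ring

private lemma L6 (n : ℕ) (i j : Fin m) (hij : i ≠ j + 1) :
    w j * PP w i n = 0 := by
  induction n with
  | zero => exact hww w hpi hlink horth j i hij
  | succ n ih => rw [PP_succ, ← mul_assoc, ih, zero_mul]

end Aux

theorem circleRelations_central_unitary {A : Type*} [NonUnitalCStarAlgebra A]
    (m : ℕ) [NeZero m] (w : Fin m → A)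
    (hpi : ∀ i : Fin m, w i * star (w i) * w i = w i)
    (hlink : ∀ i : Fin m, star (w i) * w i = w (i + 1) * star (w (i + 1)))
    (horth : ∀ i j : Fin m, i ≠ j → star (w i) * w j = 0)
    (u : A)
    (hu : u = ∑ i : Fin m,
      (List.range (m - 1)).foldl (fun acc j => acc * w (i + (Fin.ofNat m (j + 1 : ℕ)))) (w i))
    (p : A) (hp : p = ∑ i : Fin m, star (w i) * w i) :
    star u * u = p ∧ u * star u = p ∧ ∀ j : Fin m, u * w j = w j * u := by
  have hm : m - 1 + 1 = m := Nat.succ_pred_eq_of_pos (Nat.pos_of_ne_zero (NeZero.ne m))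
  have hu' : u = ∑ i : Fin m, PP w i (m - 1) := hu
  refine ⟨?_, ?_, ?_⟩
  · rw [hu', hp, star_sum, Finset.sum_mul]
    simp only [Finset.mul_sum, L1 w hpi hlink horth, Finset.sum_ite_eq, Finset.mem_univ,
      if_pos]
    exact Fintype.sum_equiv (Equiv.addRight (((m - 1 : ℕ)) : Fin m)) _ _ (fun i => rfl)
  · rw [hu', hp, star_sum, Finset.sum_mul]
    simp only [Finset.mul_sum, L2 w hpi hlink horth, Finset.sum_ite_eq, Finset.mem_univ,
      if_pos]
    have key : ∀ i : Fin m, w i * star (w i) = star (w (i - 1)) * w (i - 1) := by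
      intro i
      rw [hlink (i - 1)]
      simp
    simp only [key]
    exact Fintype.sum_equiv (Equiv.subRight (1 : Fin m)) _ _ (fun i => rfl)
  · intro j
    have hcast : ∀ i : Fin m, i + ((m - 1 : ℕ) : Fin m) + 1 = i := by
      intro i
      have h0 : (((m - 1 : ℕ)) : Fin m) + 1 = 0 := by
        rw [← Nat.cast_add_one, hm, Fin.natCast_self]
      rw [add_assoc, h0, add_zero]
    rw [hu', Finset.sum_mul, Finset.mul_sum]
    rw [Finset.sum_eq_single j (fun i _ hij =>
        L4 w hpi hlink horth (m - 1) i j (by rw [hcast i]; exact hij.symm))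
      (by simp),
      Finset.sum_eq_single (j + 1) (fun i _ hij =>
        L6 w hpi hlink horth (m - 1) i j hij) (by simp)]
    rw [L5 w hpi hlink horth (m - 1) j]
    conv_lhs => rw [show w j = w (j + ((m - 1 + 1 : ℕ) : Fin m)) by
      rw [hm, Fin.natCast_self, add_zero]]
    rw [← PP_succ]
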